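/- Let p ∈ ℕ, p ≥ 1, let A ∈ ℝ^{p×p} be skew-symmetric and B ∈ ℝ^{p×p}, and let γ(t) = exp(tS)·[I_p; 0]·exp(−tA) with S = [[2A, −Bᵀ],[B, 0]]. Then for all j, k ∈ ℕ the Frobenius inner product tr((γ^{(j)}(t))ᵀ · γ^{(k)}(t)) is constant in t ∈ ℝ. -/

import Mathlib

open Matrix

attribute [local instance] Matrix.frobeniusNormedAddCommGroup Matrix.frobeniusNormedSpace
attribute [local instance] Matrix.frobeniusNormedRing Matrix.frobeniusNormedAlgebra

section aux

variable {l m n : Type*} [Fintype l] [Fintype m] [Fintype n]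

private lemma matrix_mul_isBoundedBilinearMap :
    IsBoundedBilinearMap ℝ (fun q : Matrix l m ℝ × Matrix m n ℝ => q.1 * q.2) where
  add_left x₁ x₂ y := Matrix.add_mul x₁ x₂ y
  smul_left c x y := Matrix.smul_mul c x y
  add_right x y₁ y₂ := Matrix.mul_add x y₁ y₂
  smul_right c x y := Matrix.mul_smul x c y
  bound := ⟨1, one_pos, fun x y => by
    simpa using Matrix.frobenius_norm_mul x y⟩

private lemma HasDerivAt.matrix_mul {u : ℝ → Matrix l m ℝ} {v : ℝ → Matrix m n ℝ}
    {u' : Matrix l m ℝ} {v' : Matrix m n ℝ} {t : ℝ}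
    (hu : HasDerivAt u u' t) (hv : HasDerivAt v v' t) :
    HasDerivAt (fun s => u s * v s) (u t * v' + u' * v t) t := by
  have h := ((matrix_mul_isBoundedBilinearMap (l := l) (m := m) (n := n)).hasFDerivAt
    (u t, v t)).comp_hasDerivAt t
    (hu.prodMk hv)
  simp only [IsBoundedBilinearMap.deriv_apply] at h
  exact h

end aux

/-- The Frobenius inner products `tr((γ⁽ʲ⁾(t))ᵀ γ⁽ᵏ⁾(t))` of the iterated derivatives of a
Euclidean Stiefel geodesic `γ(t) = exp(tS) [I; 0] exp(-tA)`, `S = [[2A, -Bᵀ], [B, 0]]`,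
are constant in `t`. -/
theorem stiefel_geodesic_iteratedDeriv_inner_constant
    {p : ℕ} (hp : 1 ≤ p)
    (A B : Matrix (Fin p) (Fin p) ℝ) (hA : Aᵀ = -A)
    (S : Matrix (Fin p ⊕ Fin p) (Fin p ⊕ Fin p) ℝ)
    (hS : S = Matrix.fromBlocks (2 • A) (-Bᵀ) B 0)
    (γ : ℝ → Matrix (Fin p ⊕ Fin p) (Fin p) ℝ)
    (hγ : ∀ t : ℝ, γ t =
      NormedSpace.exp (t • S) * (Matrix.fromRows 1 0 : Matrix (Fin p ⊕ Fin p) (Fin p) ℝ) *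
        NormedSpace.exp ((-t) • A)) :
    ∀ j k : ℕ, ∃ c : ℝ, ∀ t : ℝ,
      Matrix.trace ((iteratedDeriv j γ t)ᵀ * iteratedDeriv k γ t) = c := by
  have hSt : Sᵀ = -S := by
    have h2A : (2 • A)ᵀ = -(2 • A) := by rw [Matrix.transpose_smul, hA, smul_neg]
    rw [hS, Matrix.fromBlocks_transpose, Matrix.fromBlocks_neg, h2A, Matrix.transpose_neg,
      Matrix.transpose_transpose, Matrix.transpose_zero, neg_neg, neg_zero]
  -- every iterated derivative has the form exp(t•S) * C * exp(t•(-A))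
  have key : ∀ n : ℕ, ∃ C : Matrix (Fin p ⊕ Fin p) (Fin p) ℝ, ∀ t : ℝ,
      iteratedDeriv n γ t =
        NormedSpace.exp (t • S) * C * NormedSpace.exp (t • (-A)) := by
    intro n
    induction n with
    | zero =>
      refine ⟨Matrix.fromRows 1 0, fun t => ?_⟩
      simpa [smul_neg, neg_smul] using hγ t
    | succ n ih =>
      obtain ⟨C, hC⟩ := ih
      refine ⟨S * C + C * (-A), fun t => ?_⟩
      rw [iteratedDeriv_succ]
      have hfun : iteratedDeriv n γ =
          fun s : ℝ => NormedSpace.exp (s • S) * C * NormedSpace.exp (s • (-A)) :=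
        funext hC
      rw [hfun]
      have h1 : HasDerivAt (fun s : ℝ => NormedSpace.exp (s • S))
          (NormedSpace.exp (t • S) * S) t := hasDerivAt_exp_smul_const S t
      have h2 : HasDerivAt (fun s : ℝ => NormedSpace.exp (s • (-A)))
          (NormedSpace.exp (t • (-A)) * (-A)) t := hasDerivAt_exp_smul_const (-A) t
      have h1' : HasDerivAt (fun s : ℝ => NormedSpace.exp (s • S) * C)
          (NormedSpace.exp (t • S) * S * C) t := by
        simpa using h1.matrix_mul (hasDerivAt_const t C)
      have h3 := h1'.matrix_mul h2
      rw [h3.deriv]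
      have hcomm : NormedSpace.exp (t • (-A)) * (-A) = (-A) * NormedSpace.exp (t • (-A)) :=
        (((Commute.refl (-A)).smul_left t).exp_left).eq
      simp only [Matrix.mul_add, Matrix.add_mul, Matrix.mul_assoc, hcomm]
      abel
  intro j k
  obtain ⟨Cj, hCj⟩ := key j
  obtain ⟨Ck, hCk⟩ := key k
  refine ⟨Matrix.trace (Cjᵀ * Ck), fun t => ?_⟩
  rw [hCj t, hCk t]
  have hTS : (NormedSpace.exp (t • S))ᵀ = NormedSpace.exp (t • (-S)) := by
    rw [← Matrix.exp_transpose, transpose_smul, hSt]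
  have hTA : (NormedSpace.exp (t • (-A)))ᵀ = NormedSpace.exp (t • A) := by
    rw [← Matrix.exp_transpose, transpose_smul, transpose_neg, hA, neg_neg]
  have hS1 : NormedSpace.exp (t • (-S)) * NormedSpace.exp (t • S) = 1 := by
    rw [← Matrix.exp_add_of_commute _ _ (((Commute.refl S).neg_left.smul_left t).smul_right t),
      smul_neg, neg_add_cancel, NormedSpace.exp_zero]
  have hA1 : NormedSpace.exp (t • (-A)) * NormedSpace.exp (t • A) = 1 := by
    rw [← Matrix.exp_add_of_commute _ _ (((Commute.refl A).neg_left.smul_left t).smul_right t),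
      smul_neg, neg_add_cancel, NormedSpace.exp_zero]
  rw [transpose_mul, transpose_mul, hTS, hTA, Matrix.trace_mul_comm]
  simp only [Matrix.mul_assoc]
  rw [← Matrix.mul_assoc (NormedSpace.exp (t • (-A))) (NormedSpace.exp (t • A)), hA1,
    Matrix.one_mul, Matrix.trace_mul_comm]
  simp only [Matrix.mul_assoc]
  rw [hS1, Matrix.mul_one, Matrix.trace_mul_comm]
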